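/- (Existence and uniqueness for the free boundary ODE, Lemma 4.2.) Let $a, b, c, y_0, z_0$ be positive real constants. Then there exists a unique pair $(\hat x, y)$ with $\hat x > 0$ and $y: [0,\hat x]\to\mathbb{R}$ twice differentiable such that $b\,y'(x) - a\,y''(x) - c = 0$ for $0 < x < \hat x$, $y(0) = -y_0$, $y(\hat x) = 0$, and $y'(\hat x) = z_0$. -/

import Mathlib

/-- `y` solves the free boundary problem `b y' - a y'' - c = 0` on `(0, x̂)`
with `y(0) = -y₀`, `y(x̂) = 0`, `y'(x̂) = z₀`. -/
def SolvesFBP (a b c y0 z0 xhat : ℝ) (y : ℝ → ℝ) : Prop :=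
  (∀ x ∈ Set.Icc 0 xhat, DifferentiableAt ℝ y x ∧ DifferentiableAt ℝ (deriv y) x) ∧
  (∀ x ∈ Set.Ioo 0 xhat, b * deriv y x - a * deriv (deriv y) x - c = 0) ∧
  y 0 = -y0 ∧ y xhat = 0 ∧ deriv y xhat = z0

private lemma exp_aux (r T x : ℝ) :
    HasDerivAt (fun s => Real.exp (r * (s - T))) (Real.exp (r * (x - T)) * r) x := by
  have h1 : HasDerivAt (fun s : ℝ => r * (s - T)) (r * 1) x :=
    ((hasDerivAt_id x).sub_const T).const_mul r
  simpa using h1.exp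

private lemma exp_aux2 (r T : ℝ) :
    HasDerivAt (fun t : ℝ => Real.exp (r * (0 - t))) (Real.exp (r * (0 - T)) * (-r)) T := by
  have h1 : HasDerivAt (fun t : ℝ => r * (0 - t)) (r * (0 - 1)) T :=
    ((hasDerivAt_const T (0:ℝ)).sub (hasDerivAt_id T)).const_mul r
  have h2 := h1.exp
  convert h2 using 1
  ring

/-- The derivative of any solution has the explicit exponential form. -/
lemma fbp_deriv_formula (a b c y0 z0 T : ℝ) (ha : 0 < a) (hb : 0 < b)
    (hT : 0 < T) (y : ℝ → ℝ) (h : SolvesFBP a b c y0 z0 T y) :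
    ∀ x ∈ Set.Icc 0 T, deriv y x =
      c / b + (z0 - c / b) * Real.exp (b / a * (x - T)) := by
  obtain ⟨hdiff, hode, -, -, hT'⟩ := h
  have hzc : ContinuousOn (deriv y) (Set.Icc 0 T) := fun p hp =>
    ((hdiff p hp).2.continuousAt).continuousWithinAt
  set g : ℝ → ℝ := fun x => (deriv y x - c / b) * Real.exp (-(b / a * x)) with hg
  have hgc : ContinuousOn g (Set.Icc 0 T) :=
    (hzc.sub continuousOn_const).mul
      ((Real.continuous_exp.comp (continuous_const.mul continuous_id).neg).continuousOn)
  have hg0 : ∀ x ∈ Set.Ioo 0 T, HasDerivAt g 0 x := by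
    intro x hx
    have hmem : x ∈ Set.Icc 0 T := ⟨hx.1.le, hx.2.le⟩
    have hz1 : HasDerivAt (deriv y) (deriv (deriv y) x) x := (hdiff x hmem).2.hasDerivAt
    have he : HasDerivAt (fun s : ℝ => Real.exp (-(b / a * s)))
        (Real.exp (-(b / a * x)) * (-(b / a))) x := by
      have h1 : HasDerivAt (fun s : ℝ => -(b / a * s)) (-(b / a)) x := by
        simpa using ((hasDerivAt_id x).const_mul (b / a)).fun_neg
      simpa using h1.exp
    have hprod := (hz1.sub_const (c / b)).mul he
    have hdd : deriv (deriv y) x = b / a * (deriv y x - c / b) := by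
      have h2 := hode x hx
      have h3 : b / a * (deriv y x - c / b) = (b * deriv y x - c) / a := by
        field_simp
      rw [h3, eq_div_iff ha.ne']
      linarith
    rw [hg]
    refine hprod.congr_deriv ?_
    rw [hdd]; ring
  have hconst : ∀ x ∈ Set.Icc 0 T, g x = g T := by
    have hIoo : ∀ x ∈ Set.Ioo 0 T, g x = g T := by
      intro x hx
      have hkey := constant_of_has_deriv_right_zero
        (hgc.mono (Set.Icc_subset_Icc hx.1.le le_rfl))
        (fun p hp => (hg0 p ⟨lt_of_lt_of_le hx.1 hp.1, hp.2⟩).hasDerivWithinAt)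
      exact (hkey T ⟨hx.2.le, le_rfl⟩).symm
    intro x hx
    rcases eq_or_lt_of_le hx.1 with h0x | h0x
    · have hne : (nhdsWithin (0:ℝ) (Set.Ioo 0 T)).NeBot := by
        apply mem_closure_iff_nhdsWithin_neBot.mp
        rw [closure_Ioo hT.ne]
        exact Set.left_mem_Icc.mpr hT.le
      have h1 : Filter.Tendsto g (nhdsWithin (0:ℝ) (Set.Ioo 0 T)) (nhds (g 0)) :=
        ((hgc 0 (Set.left_mem_Icc.mpr hT.le)).mono Set.Ioo_subset_Icc_self)
      have h2 : Filter.Tendsto g (nhdsWithin (0:ℝ) (Set.Ioo 0 T)) (nhds (g T)) := by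
        refine Filter.Tendsto.congr' ?_ tendsto_const_nhds
        filter_upwards [self_mem_nhdsWithin] with p hp
        exact (hIoo p hp).symm
      rw [← h0x]
      exact tendsto_nhds_unique h1 h2
    · rcases eq_or_lt_of_le hx.2 with hxT | hxT
      · rw [hxT]
      · exact hIoo x ⟨h0x, hxT⟩
  intro x hx
  have hgx := hconst x hx
  simp only [hg] at hgx
  rw [hT'] at hgx
  have h3 : (deriv y x - c / b) * (Real.exp (-(b / a * x)) * Real.exp (b / a * x))
      = (z0 - c / b) * (Real.exp (-(b / a * T)) * Real.exp (b / a * x)) := by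
    rw [← mul_assoc, ← mul_assoc, hgx]
  rw [← Real.exp_add, ← Real.exp_add] at h3
  simp only [neg_add_cancel, Real.exp_zero, mul_one] at h3
  have h4 : -(b / a * T) + b / a * x = b / a * (x - T) := by ring
  rw [h4] at h3
  linarith

/-- Any solution has the explicit value formula. -/
lemma fbp_val_formula (a b c y0 z0 T : ℝ) (ha : 0 < a) (hb : 0 < b)
    (hT : 0 < T) (y : ℝ → ℝ) (h : SolvesFBP a b c y0 z0 T y) :
    ∀ x ∈ Set.Icc 0 T, y x = -y0 + c / b * x +
      (z0 - c / b) * (a / b) *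
        (Real.exp (b / a * (x - T)) - Real.exp (b / a * (0 - T))) := by
  have hder := fbp_deriv_formula a b c y0 z0 T ha hb hT y h
  obtain ⟨hdiff, hode, h0, hTval, hT'⟩ := h
  intro x hx
  have hsub : Set.Icc (0:ℝ) x ⊆ Set.Icc 0 T := Set.Icc_subset_Icc le_rfl hx.2
  have huIcc : Set.uIcc (0:ℝ) x = Set.Icc 0 x := Set.uIcc_of_le hx.1
  have hcont : ContinuousOn (deriv y) (Set.Icc 0 x) := fun p hp =>
    ((hdiff p (hsub hp)).2.continuousAt).continuousWithinAt
  have hFTC : ∫ s in (0:ℝ)..x, deriv y s = y x - y 0 := by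
    apply intervalIntegral.integral_eq_sub_of_hasDerivAt
    · intro t ht
      rw [huIcc] at ht
      exact (hdiff t (hsub ht)).1.hasDerivAt
    · exact (huIcc ▸ hcont).intervalIntegrable
  have hcongr : ∫ s in (0:ℝ)..x, deriv y s
      = ∫ s in (0:ℝ)..x, (c / b + (z0 - c / b) * Real.exp (b / a * (s - T))) := by
    apply intervalIntegral.integral_congr
    rw [huIcc]
    intro p hp
    exact hder p (hsub hp)
  have hHd : ∀ s : ℝ, HasDerivAt
      (fun s => c / b * s + (z0 - c / b) * (a / b) * Real.exp (b / a * (s - T)))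
      (c / b + (z0 - c / b) * Real.exp (b / a * (s - T))) s := by
    intro s
    have h1 := ((hasDerivAt_id s).const_mul (c / b)).add
      ((exp_aux (b / a) T s).const_mul ((z0 - c / b) * (a / b)))
    refine h1.congr_deriv ?_
    field_simp
  have hZc : Continuous fun s : ℝ => c / b + (z0 - c / b) * Real.exp (b / a * (s - T)) := by
    fun_prop
  have hFTC2 : ∫ s in (0:ℝ)..x, (c / b + (z0 - c / b) * Real.exp (b / a * (s - T)))
      = (c / b * x + (z0 - c / b) * (a / b) * Real.exp (b / a * (x - T)))
        - (c / b * 0 + (z0 - c / b) * (a / b) * Real.exp (b / a * (0 - T))) :=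
    intervalIntegral.integral_eq_sub_of_hasDerivAt (fun t _ => hHd t)
      (hZc.intervalIntegrable 0 x)
  rw [hcongr, hFTC2, h0] at hFTC
  linarith

/-- The free boundary function. -/
noncomputable def fbpF (a b c z0 : ℝ) (T : ℝ) : ℝ :=
  c / b * T + (z0 - c / b) * (a / b) * (1 - Real.exp (b / a * (0 - T)))

lemma fbpF_hasDerivAt (a b c z0 : ℝ) (ha : 0 < a) (hb : 0 < b) (T : ℝ) :
    HasDerivAt (fbpF a b c z0)
      (c / b + (z0 - c / b) * Real.exp (b / a * (0 - T))) T := by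
  have h3 := ((hasDerivAt_const T (1:ℝ)).sub (exp_aux2 (b / a) T)).const_mul
    ((z0 - c / b) * (a / b))
  have h4 := ((hasDerivAt_id T).const_mul (c / b)).add h3
  have h5 : HasDerivAt (fbpF a b c z0)
      (c / b * 1 + (z0 - c / b) * (a / b) * (0 - Real.exp (b / a * (0 - T)) * (-(b / a)))) T := h4
  convert h5 using 1
  field_simp
  ring

lemma fbpF_continuous (a b c z0 : ℝ) : Continuous (fbpF a b c z0) := by
  unfold fbpF
  fun_prop

lemma fbpF_strictMono (a b c z0 : ℝ) (ha : 0 < a) (hb : 0 < b) (hc : 0 < c)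
    (hz0 : 0 < z0) : StrictMonoOn (fbpF a b c z0) (Set.Ici 0) := by
  apply strictMonoOn_of_deriv_pos (convex_Ici 0) (fbpF_continuous a b c z0).continuousOn
  intro T hT
  rw [interior_Ici] at hT
  rw [(fbpF_hasDerivAt a b c z0 ha hb T).deriv]
  have he0 : 0 < Real.exp (b / a * (0 - T)) := Real.exp_pos _
  have he1 : Real.exp (b / a * (0 - T)) < 1 := by
    rw [Real.exp_lt_one_iff]
    have : 0 < b / a := div_pos hb ha
    nlinarith [hT.out]
  have hk : 0 < c / b := div_pos hc hb
  nlinarith [mul_pos hk (sub_pos.mpr he1), mul_pos hz0 he0]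

lemma fbpF_root (a b c y0 z0 : ℝ) (ha : 0 < a) (hb : 0 < b) (hc : 0 < c)
    (hy0 : 0 < y0) (_hz0 : 0 < z0) : ∃ T > (0:ℝ), fbpF a b c z0 T = y0 := by
  set w := (z0 - c / b) * (a / b) with hw
  set M := (y0 + |w|) * (b / c) + 1 with hM
  have hM0 : 0 < M := by
    have h1 : 0 < (y0 + |w|) * (b / c) :=
      mul_pos (by positivity) (div_pos hb hc)
    simp only [hM]; linarith
  have he0 : 0 < Real.exp (b / a * (0 - M)) := Real.exp_pos _
  have he1 : Real.exp (b / a * (0 - M)) ≤ 1 := by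
    rw [Real.exp_le_one_iff]
    have h0 : 0 < b / a := div_pos hb ha
    nlinarith [mul_pos h0 hM0]
  have hFM : y0 ≤ fbpF a b c z0 M := by
    have hbound : -|w| ≤ w * (1 - Real.exp (b / a * (0 - M))) := by
      nlinarith [mul_nonneg (by linarith [neg_abs_le w] : (0:ℝ) ≤ w + |w|)
          (by linarith : (0:ℝ) ≤ 1 - Real.exp (b / a * (0 - M))),
        mul_nonneg (abs_nonneg w) he0.le]
    have hcb : c / b * M = (y0 + |w|) + c / b := by
      simp only [hM]
      field_simp
    have hkpos : 0 < c / b := div_pos hc hb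
    unfold fbpF
    rw [← hw, hcb]
    linarith
  have hF0 : fbpF a b c z0 0 = 0 := by
    unfold fbpF
    simp
  have hIVT := intermediate_value_Icc hM0.le (fbpF_continuous a b c z0).continuousOn
  have hy0mem : y0 ∈ Set.Icc (fbpF a b c z0 0) (fbpF a b c z0 M) := by
    rw [hF0]; exact ⟨hy0.le, hFM⟩
  obtain ⟨T, hTmem, hFT⟩ := hIVT hy0mem
  refine ⟨T, ?_, hFT⟩
  rcases hTmem.1.lt_or_eq with h | h
  · exact h
  · exfalso
    rw [← h, hF0] at hFT
    linarith

theorem fbp_exists_unique (a b c y0 z0 : ℝ)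
    (ha : 0 < a) (hb : 0 < b) (hc : 0 < c) (hy0 : 0 < y0) (hz0 : 0 < z0) :
    ∃ xhat > (0:ℝ), ∃ y : ℝ → ℝ, SolvesFBP a b c y0 z0 xhat y ∧
      ∀ xhat' > (0:ℝ), ∀ y' : ℝ → ℝ, SolvesFBP a b c y0 z0 xhat' y' →
        xhat' = xhat ∧ Set.EqOn y' y (Set.Icc 0 xhat) := by
  obtain ⟨T, hTpos, hFT⟩ := fbpF_root a b c y0 z0 ha hb hc hy0 hz0
  set y : ℝ → ℝ := fun x => -y0 + c / b * x +
    (z0 - c / b) * (a / b) *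
      (Real.exp (b / a * (x - T)) - Real.exp (b / a * (0 - T))) with hy
  have hyd : ∀ x, HasDerivAt y (c / b + (z0 - c / b) * Real.exp (b / a * (x - T))) x := by
    intro x
    have h1 := (((hasDerivAt_id x).const_mul (c / b)).add
      (((exp_aux (b / a) T x).sub_const (Real.exp (b / a * (0 - T)))).const_mul
        ((z0 - c / b) * (a / b)))).const_add (-y0)
    simp only [id_eq] at h1
    have h2 : y = fun x => -y0 + (c / b * x + (z0 - c / b) * (a / b) *
        (Real.exp (b / a * (x - T)) - Real.exp (b / a * (0 - T)))) := by
      funext s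
      rw [hy]
      ring
    rw [h2]
    refine h1.congr_deriv ?_
    field_simp
  have hyderiv : deriv y = fun x => c / b + (z0 - c / b) * Real.exp (b / a * (x - T)) :=
    funext fun x => (hyd x).deriv
  have hzd : ∀ x, HasDerivAt (deriv y)
      ((z0 - c / b) * (b / a) * Real.exp (b / a * (x - T))) x := by
    intro x
    rw [hyderiv]
    have h2 := (hasDerivAt_const x (c / b)).add
      ((exp_aux (b / a) T x).const_mul (z0 - c / b))
    refine h2.congr_deriv ?_
    ring
  have hsolves : SolvesFBP a b c y0 z0 T y := by
    refine ⟨fun x _ => ⟨(hyd x).differentiableAt, (hzd x).differentiableAt⟩, ?_, ?_, ?_, ?_⟩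
    · intro x _
      rw [(hzd x).deriv, (hyd x).deriv]
      field_simp
      ring
    · simp [hy]
    · have hE : Real.exp (b / a * (T - T)) = 1 := by simp
      have hFT' : c / b * T + (z0 - c / b) * (a / b) *
          (1 - Real.exp (b / a * (0 - T))) = y0 := hFT
      simp only [hy, hE]
      linarith
    · rw [(hyd T).deriv]
      simp
  refine ⟨T, hTpos, y, hsolves, ?_⟩
  intro T' hT' y' hsol'
  have hval' := fbp_val_formula a b c y0 z0 T' ha hb hT' y' hsol'
  have hFT'' : fbpF a b c z0 T' = y0 := by
    have h1 := hval' T' (Set.right_mem_Icc.mpr hT'.le)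
    rw [hsol'.2.2.2.1] at h1
    have hE : Real.exp (b / a * (T' - T')) = 1 := by simp
    rw [hE] at h1
    unfold fbpF
    linarith
  have hTT : T' = T := by
    apply (fbpF_strictMono a b c z0 ha hb hc hz0).injOn hT'.le hTpos.le
    rw [hFT'', hFT]
  subst hTT
  refine ⟨rfl, ?_⟩
  intro x hx
  have h1 := hval' x hx
  rw [h1]
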